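/- arXiv:1911.00259 — 2 statements merged into one kernel-verified Lean document; each statement's English description precedes it below -/
import Mathlib

section
/- Let C be an extriangulated category with weak kernels and F ∈ mod C. Then F sends every deflation of C to a monomorphism of abelian groups if and only if Hom(S, F) = 0 for every defect S ∈ def C. -/
open CategoryTheory CategoryTheory.Limits Opposite

universe w' w v u

noncomputable section

namespace PaperStmt

variable {C : Type u} [Category.{v} C] [Preadditive C]

/-- The category of right `C`-modules (contravariant functors `C ⥤ Ab`). -/
abbrev Mod (C : Type u) [Category.{v} C] [Preadditive C] := Cᵒᵖ ⥤ AddCommGrpCat.{v}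

/-- A `C`-module `F` is finitely presented if it admits a presentation
`Hom(-,Y) ⟶ Hom(-,X) ⟶ F ⟶ 0`, expressed pointwise:  there are a morphism
`f : Y ⟶ X` and an epimorphism `p : Hom(-,X) ⟶ F` whose kernel is, at every
object `W`, exactly the set of morphisms factoring through `f`. -/
def IsFinitelyPresented (F : Mod C) : Prop :=
  ∃ (Y X : C) (f : Y ⟶ X) (p : preadditiveYoneda.obj X ⟶ F),
    (∀ W : Cᵒᵖ, Function.Surjective (p.app W)) ∧
    (∀ (W : C) (h : W ⟶ X), p.app (op W) h = 0 ↔ ∃ k : W ⟶ Y, k ≫ f = h)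

/-- `C` has weak kernels: every morphism admits a weak kernel. -/
def HasWeakKernels (C : Type u) [Category.{v} C] [Preadditive C] : Prop :=
  ∀ ⦃X Y : C⦄ (f : X ⟶ Y), ∃ (K : C) (g : K ⟶ X), g ≫ f = 0 ∧
    ∀ ⦃W : C⦄ (h : W ⟶ X), h ≫ f = 0 → ∃ t : W ⟶ K, t ≫ g = h

/-- An extriangulated category structure `(E, s)` on an additive category `C`
(Nakaoka–Palu).  The realization `s` is encoded by the relation
`Real δ g f`, meaning that the sequence `Z ⟶ Y ⟶ X` belongs to the
equivalence class `s(δ)`. -/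
structure Extriangulated (C : Type u) [Category.{v} C] [Preadditive C]
    [HasZeroObject C] [HasBinaryBiproducts C] where
  /-- the bifunctor of `E`-extensions -/
  E : Cᵒᵖ ⥤ C ⥤ AddCommGrpCat.{v}
  additive₁ : E.Additive
  additive₂ : ∀ X : Cᵒᵖ, (E.obj X).Additive
  /-- `Real δ g f` : the pair `(g, f)` realizes the extension `δ`. -/
  Real : ∀ ⦃X Z : C⦄, ((E.obj (op X)).obj Z) → ∀ ⦃Y : C⦄, (Z ⟶ Y) → (Y ⟶ X) → Prop
  /-- every extension is realized -/
  real_exists : ∀ ⦃X Z : C⦄ (δ : (E.obj (op X)).obj Z),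
    ∃ (Y : C) (g : Z ⟶ Y) (f : Y ⟶ X), Real δ g f
  /-- any two realizations of the same extension are equivalent -/
  real_unique : ∀ ⦃X Z : C⦄ (δ : (E.obj (op X)).obj Z) ⦃Y Y' : C⦄
    (g : Z ⟶ Y) (f : Y ⟶ X) (g' : Z ⟶ Y') (f' : Y' ⟶ X),
    Real δ g f → Real δ g' f' →
    ∃ i : Y ≅ Y', g ≫ i.hom = g' ∧ i.hom ≫ f' = f
  /-- the realization is closed under equivalence of sequences -/
  real_of_iso : ∀ ⦃X Z : C⦄ (δ : (E.obj (op X)).obj Z) ⦃Y Y' : C⦄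
    (g : Z ⟶ Y) (f : Y ⟶ X) (i : Y ≅ Y'),
    Real δ g f → Real δ (g ≫ i.hom) (i.inv ≫ f)
  /-- `s(0)` is the split sequence (additivity of `s`, part 1) -/
  real_zero : ∀ (X Z : C),
    Real (0 : (E.obj (op X)).obj Z) (biprod.inl : Z ⟶ Z ⊞ X) (biprod.snd : Z ⊞ X ⟶ X)
  /-- `s(δ ⊕ δ') = s(δ) ⊕ s(δ')` (additivity of `s`, part 2) -/
  real_add : ∀ ⦃X Z X' Z' : C⦄ (δ : (E.obj (op X)).obj Z) (δ' : (E.obj (op X')).obj Z')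
    ⦃Y Y' : C⦄ (g : Z ⟶ Y) (f : Y ⟶ X) (g' : Z' ⟶ Y') (f' : Y' ⟶ X'),
    Real δ g f → Real δ' g' f' →
    Real ((E.map (biprod.fst : X ⊞ X' ⟶ X).op).app _ ((E.obj (op X)).map (biprod.inl : Z ⟶ Z ⊞ Z') δ) +
          (E.map (biprod.snd : X ⊞ X' ⟶ X').op).app _ ((E.obj (op X')).map (biprod.inr : Z' ⟶ Z ⊞ Z') δ'))
      (biprod.map g g') (biprod.map f f')
  /-- realization of morphisms of extensions (condition `(∗)`) -/
  real_lift : ∀ ⦃X Z X' Z' : C⦄ (δ : (E.obj (op X)).obj Z) (δ' : (E.obj (op X')).obj Z')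
    ⦃Y Y' : C⦄ (g : Z ⟶ Y) (f : Y ⟶ X) (g' : Z' ⟶ Y') (f' : Y' ⟶ X')
    (z : Z ⟶ Z') (x : X ⟶ X'),
    Real δ g f → Real δ' g' f' →
    (E.obj (op X)).map z δ = (E.map x.op).app Z' δ' →
    ∃ y : Y ⟶ Y', g ≫ y = z ≫ g' ∧ y ≫ f' = f ≫ x
  /-- (ET3) -/
  et3 : ∀ ⦃X Z X' Z' : C⦄ (δ : (E.obj (op X)).obj Z) (δ' : (E.obj (op X')).obj Z')
    ⦃Y Y' : C⦄ (g : Z ⟶ Y) (f : Y ⟶ X) (g' : Z' ⟶ Y') (f' : Y' ⟶ X')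
    (z : Z ⟶ Z') (y : Y ⟶ Y'),
    Real δ g f → Real δ' g' f' → g ≫ y = z ≫ g' →
    ∃ x : X ⟶ X', y ≫ f' = f ≫ x ∧
      (E.obj (op X)).map z δ = (E.map x.op).app Z' δ'
  /-- (ET3)ᵒᵖ -/
  et3op : ∀ ⦃X Z X' Z' : C⦄ (δ : (E.obj (op X)).obj Z) (δ' : (E.obj (op X')).obj Z')
    ⦃Y Y' : C⦄ (g : Z ⟶ Y) (f : Y ⟶ X) (g' : Z' ⟶ Y') (f' : Y' ⟶ X')
    (y : Y ⟶ Y') (x : X ⟶ X'),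
    Real δ g f → Real δ' g' f' → y ≫ f' = f ≫ x →
    ∃ z : Z ⟶ Z', g ≫ y = z ≫ g' ∧
      (E.obj (op X)).map z δ = (E.map x.op).app Z' δ'
  /-- (ET4) -/
  et4 : ∀ ⦃X Z A : C⦄ ⦃Y B : C⦄
    (δ : (E.obj (op X)).obj Z) (δ' : (E.obj (op A)).obj Y)
    (g : Z ⟶ Y) (f : Y ⟶ X) (b : Y ⟶ B) (a : B ⟶ A),
    Real δ g f → Real δ' b a →
    ∃ (Cc : C) (f' : B ⟶ Cc) (b' : X ⟶ Cc) (a' : Cc ⟶ A)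
      (δ'' : (E.obj (op Cc)).obj Z),
      Real δ'' (g ≫ b) f' ∧
      f ≫ b' = b ≫ f' ∧ f' ≫ a' = a ∧
      Real ((E.obj (op A)).map f δ') b' a' ∧
      (E.map b'.op).app Z δ'' = δ ∧
      (E.obj (op Cc)).map g δ'' = (E.map a'.op).app Y δ'
  /-- (ET4)ᵒᵖ -/
  et4op : ∀ ⦃X Y Z A B : C⦄
    (δ : (E.obj (op Z)).obj X) (δ' : (E.obj (op Y)).obj A)
    (f : X ⟶ Y) (g : Y ⟶ Z) (m : A ⟶ B) (n : B ⟶ Y),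
    Real δ f g → Real δ' m n →
    ∃ (Cc : C) (f' : Cc ⟶ B) (b' : Cc ⟶ X) (a' : A ⟶ Cc)
      (δ'' : (E.obj (op Z)).obj Cc),
      Real δ'' f' (n ≫ g) ∧
      b' ≫ f = f' ≫ n ∧ a' ≫ f' = m ∧
      Real ((E.map f.op).app A δ') a' b' ∧
      (E.obj (op Z)).map b' δ'' = δ ∧
      (E.map g.op).app Cc δ'' = (E.obj (op Y)).map a' δ'

namespace Extriangulated

variable {C : Type u} [Category.{v} C] [Preadditive C]
  [HasZeroObject C] [HasBinaryBiproducts C] (ET : Extriangulated C)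

/-- `(g, f)` is a conflation. -/
def IsConflation ⦃Z Y X : C⦄ (g : Z ⟶ Y) (f : Y ⟶ X) : Prop :=
  ∃ δ : ((ET.E.obj (op X)).obj Z), ET.Real δ g f

/-- `f` is a deflation. -/
def IsDeflation ⦃Y X : C⦄ (f : Y ⟶ X) : Prop :=
  ∃ (Z : C) (g : Z ⟶ Y), ET.IsConflation g f

/-- `g` is an inflation. -/
def IsInflation ⦃Z Y : C⦄ (g : Z ⟶ Y) : Prop :=
  ∃ (X : C) (f : Y ⟶ X), ET.IsConflation g f

end Extriangulated


variable {C : Type u} [Category.{v} C] [Preadditive C]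
  [HasZeroObject C] [HasBinaryBiproducts C]

/-- A `C`-module `F` is effaceable if every element of `F` is killed by some
deflation. -/
def IsEffaceable (ET : Extriangulated C) (F : Mod C) : Prop :=
  ∀ (X : C) (x : F.obj (op X)), ∃ (Y : C) (α : Y ⟶ X),
    ET.IsDeflation α ∧ F.map α.op x = 0

/-- A `C`-module `F` is a defect if for some conflation `Z ⟶ Y ⟶ X` there is
an exact sequence `Hom(-,Z) ⟶ Hom(-,Y) ⟶ Hom(-,X) ⟶ F ⟶ 0`, i.e. `F` is the
cokernel of `Hom(-,Y) ⟶ Hom(-,X)` (expressed pointwise). -/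
def IsDefect (ET : Extriangulated C) (F : Mod C) : Prop :=
  ∃ (Z Y X : C) (g : Z ⟶ Y) (f : Y ⟶ X), ET.IsConflation g f ∧
    ∃ p : preadditiveYoneda.obj X ⟶ F,
      (∀ W : Cᵒᵖ, Function.Surjective (p.app W)) ∧
      (∀ (W : C) (h : W ⟶ X), p.app (op W) h = 0 ↔ ∃ k : W ⟶ Y, k ≫ f = h)

/-- A `C`-module `F` is left exact if it sends every conflation `Z ⟶ Y ⟶ X`
to an exact sequence `0 ⟶ F(X) ⟶ F(Y) ⟶ F(Z)`. -/
def IsLeftExact (ET : Extriangulated C) (F : Mod C) : Prop :=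
  ∀ ⦃Z Y X : C⦄ (g : Z ⟶ Y) (f : Y ⟶ X), ET.IsConflation g f →
    Function.Injective (F.map f.op) ∧
    ∀ y : F.obj (op Y), F.map g.op y = 0 ↔ ∃ x : F.obj (op X), F.map f.op x = y

/-! ### Auxiliary constructions -/

section Aux

variable {Y X : C} (f : Y ⟶ X)

/-- Postcomposition with `f` as an additive map. -/
def postcompHom (W : C) : (W ⟶ Y) →+ (W ⟶ X) :=
  AddMonoidHom.mk' (fun k => k ≫ f) (fun a b => Preadditive.add_comp _ _ _ _ _ _)

/-- Precomposition with `u` as an additive map. -/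
def precompHom {W W' : C} (u : W' ⟶ W) : (W ⟶ X) →+ (W' ⟶ X) :=
  AddMonoidHom.mk' (fun h => u ≫ h) (fun a b => Preadditive.comp_add _ _ _ _ _ _)

/-- The pointwise cokernel of `Hom(-,Y) ⟶ Hom(-,X)`, as a functor. -/
def defectFunctor : Mod C where
  obj W := AddCommGrpCat.of ((W.unop ⟶ X) ⧸ (postcompHom f W.unop).range)
  map {W W'} u := AddCommGrpCat.ofHom (QuotientAddGroup.map _ _ (precompHom u.unop) (by
    rintro h ⟨k, rfl⟩
    exact ⟨u.unop ≫ k, Category.assoc _ _ _⟩))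
  map_id W := by
    refine AddCommGrpCat.ext fun x => ?_
    refine QuotientAddGroup.induction_on x fun h => ?_
    show QuotientAddGroup.mk _ = QuotientAddGroup.mk _
    simp [precompHom]
  map_comp {W W' W''} u v := by
    refine AddCommGrpCat.ext fun x => ?_
    refine QuotientAddGroup.induction_on x fun h => ?_
    show QuotientAddGroup.mk _ = QuotientAddGroup.mk _
    simp [precompHom]

/-- The canonical projection `Hom(-,X) ⟶ defectFunctor f`. -/
def defectProj : preadditiveYoneda.obj X ⟶ defectFunctor f where
  app W := AddCommGrpCat.ofHom (QuotientAddGroup.mk' (postcompHom f W.unop).range)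
  naturality {W W'} u := by
    refine AddCommGrpCat.ext fun h => ?_
    rfl

lemma defectProj_surjective (W : Cᵒᵖ) : Function.Surjective ((defectProj f).app W) :=
  QuotientAddGroup.mk'_surjective (postcompHom f W.unop).range

lemma defectProj_eq_zero_iff (W : C) (h : W ⟶ X) :
    (defectProj f).app (op W) h = 0 ↔ ∃ k : W ⟶ Y, k ≫ f = h := by
  rw [show ((defectProj f).app (op W) h : (defectFunctor f).obj (op W)) =
    QuotientAddGroup.mk h from rfl]
  refine (QuotientAddGroup.eq_zero_iff (N := (postcompHom f W).range) h).trans ?_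
  exact ⟨fun ⟨k, hk⟩ => ⟨k, hk⟩, fun ⟨k, hk⟩ => ⟨k, hk⟩⟩

end Aux

/-- A finitely presented functor is additive on morphisms, pointwise. -/
lemma fp_map_add {F : Mod C} (hF : IsFinitelyPresented F) {W W' : C}
    (a b : W ⟶ W') (x : F.obj (op W')) :
    F.map (a + b).op x = F.map a.op x + F.map b.op x := by
  obtain ⟨Y₀, X₀, f₀, p₀, hsurj, -⟩ := hF
  obtain ⟨t, rfl⟩ := hsurj (op W') x
  have key : ∀ c : W ⟶ W', F.map c.op (p₀.app (op W') t) = p₀.app (op W) (c ≫ t) := by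
    intro c
    have := congrArg (fun φ => φ t) (p₀.naturality c.op)
    exact this.symm
  rw [key, key, key, show (a + b) ≫ (t : W' ⟶ X₀) = a ≫ t + b ≫ t from Preadditive.add_comp _ _ _ _ _ _]; exact map_add _ _ _

/-- A finitely presented functor `F` over an extriangulated category with
weak kernels sends all deflations to monomorphisms if and only if
`Hom(S, F) = 0` for every defect `S`. -/
theorem sends_deflations_to_mono_iff_hom_defect_zero
    {C : Type u} [Category.{v} C] [Preadditive C] [HasZeroObject C]
    [HasBinaryBiproducts C] (ET : Extriangulated C) (hwk : HasWeakKernels C)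
    (F : Mod C) (hF : IsFinitelyPresented F) :
    (∀ ⦃Y X : C⦄ (f : Y ⟶ X), ET.IsDeflation f → Function.Injective (F.map f.op)) ↔
    (∀ S : Mod C, IsDefect ET S → ∀ α : S ⟶ F, α = 0) := by
  constructor
  · -- forward direction
    intro hmono S hS α
    obtain ⟨Z, Y, X, g, f, hconf, p, hsurj, hker⟩ := hS
    have hdefl : ET.IsDeflation f := ⟨Z, g, hconf⟩
    set q : preadditiveYoneda.obj X ⟶ F := p ≫ α with hq
    set x : F.obj (op X) := q.app (op X) (𝟙 X) with hx
    have hnat : ∀ (W : C) (h : W ⟶ X), q.app (op W) h = F.map h.op x := by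
      intro W h
      have e : ((preadditiveYoneda.obj X).map h.op) (𝟙 X) = h := Category.comp_id h
      have hn : q.app (op W) ((preadditiveYoneda.obj X).map h.op (𝟙 X))
          = F.map h.op (q.app (op X) (𝟙 X)) :=
        ConcreteCategory.congr_hom (q.naturality h.op) (𝟙 X)
      rw [e] at hn
      exact hn
    have hfx : F.map f.op x = 0 := by
      have h1 : p.app (op Y) f = 0 := (hker Y f).mpr ⟨𝟙 Y, Category.id_comp f⟩
      have h2 : q.app (op Y) f = 0 := by
        rw [hq]; show α.app (op Y) (p.app (op Y) f) = 0
        rw [h1, map_zero]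
      rw [← hnat Y f, h2]
    have hx0 : x = 0 := by
      have := hmono f hdefl (a₁ := x) (a₂ := 0)
      simp only [map_zero] at this
      exact this hfx
    ext W s
    obtain ⟨Wu⟩ := W
    obtain ⟨h, rfl⟩ := hsurj (op Wu) s
    have hz : q.app (op Wu) h = 0 := by
      rw [hnat Wu h, hx0, map_zero]
    simpa [hq] using hz
  · -- converse
    intro hzero Y X f hdefl
    obtain ⟨Z, g, hconf⟩ := hdefl
    rw [injective_iff_map_eq_zero]
    intro x hfx
    -- build α : defectFunctor f ⟶ F
    let α : defectFunctor f ⟶ F :=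
      { app := fun W => AddCommGrpCat.ofHom <| QuotientAddGroup.lift _
          (AddMonoidHom.mk' (fun h : W.unop ⟶ X => F.map h.op x)
            (fun a b => fp_map_add hF a b x))
          (by rintro h ⟨k, rfl⟩
              show F.map ((k ≫ f).op) x = 0
              rw [op_comp, F.map_comp]
              show F.map k.op (F.map f.op x) = 0
              rw [hfx, map_zero])
        naturality := by
          intro W W' u
          refine AddCommGrpCat.ext fun s => ?_
          refine QuotientAddGroup.induction_on s fun h => ?_
          show F.map ((u.unop ≫ h).op) x = F.map u (F.map h.op x)
          rw [op_comp, F.map_comp]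
          rfl }
    have hS : IsDefect ET (defectFunctor f) :=
      ⟨Z, Y, X, g, f, hconf, defectProj f, defectProj_surjective f,
        defectProj_eq_zero_iff f⟩
    have hα : α = 0 := hzero _ hS α
    have : α.app (op X) (QuotientAddGroup.mk (𝟙 X)) = 0 := by rw [hα]; rfl
    have hid : (α.app (op X) (QuotientAddGroup.mk (𝟙 X)) : F.obj (op X))
        = F.map (𝟙 X).op x := rfl
    rw [hid] at this
    simpa using this

end PaperStmt

end
end

section
/- Let (U, V) be a cotorsion pair in a triangulated category T, and regard U as an extriangulated category via E(X,Z) = Hom_T(X, Z[1]). Then: (1) for every V ∈ V, the restricted functor Hom_T(-, V[2])|_U belongs to (def U)^⊥, i.e., Hom(S, Hom(-,V[2])|_U) = 0 = Ext¹(S, Hom(-,V[2])|_U) for all defects S; (2) for every U' ∈ U, the restricted functor Hom_T(-, U'[1])|_U is a defect, i.e., belongs to def U. -/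
open CategoryTheory CategoryTheory.Limits Opposite

universe w' w v u

noncomputable section

namespace PaperStmt

variable {C : Type u} [Category.{v} C] [Preadditive C]

variable (T : Type u) [Category.{v} T] [Preadditive T] [HasZeroObject T]
  [HasShift T ℤ] [∀ n : ℤ, (CategoryTheory.shiftFunctor T n).Additive]
  [Pretriangulated T] [HasBinaryBiproducts T]

/-- A cotorsion pair `(U, V)` in a triangulated category `T`. -/
structure TriaCotorsionPair (U V : Set T) : Prop where
  isoClosed_U : ∀ ⦃X Y : T⦄, (X ≅ Y) → X ∈ U → Y ∈ U
  isoClosed_V : ∀ ⦃X Y : T⦄, (X ≅ Y) → X ∈ V → Y ∈ V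
  summand_U : ∀ ⦃X Y : T⦄, (X ⊞ Y) ∈ U → X ∈ U
  summand_V : ∀ ⦃X Y : T⦄, (X ⊞ Y) ∈ V → X ∈ V
  hom_zero : ∀ ⦃X Y : T⦄, X ∈ U → Y ∈ V → ∀ f : X ⟶ Y⟦(1 : ℤ)⟧, f = 0
  exists_triangle : ∀ X : T, ∃ (U₀ V₀ : T) (a : U₀ ⟶ X) (b : X ⟶ V₀⟦(1 : ℤ)⟧)
    (c : V₀⟦(1 : ℤ)⟧ ⟶ U₀⟦(1 : ℤ)⟧), U₀ ∈ U ∧ V₀ ∈ V ∧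
    Pretriangulated.Triangle.mk a b c ∈ Pretriangulated.distinguishedTriangles

variable {T}

/-- A conflation in the extriangulated category `U` (with
`E(X, Z) = Hom_T(X, Z⟦1⟧)`): a pair of composable morphisms of `U` fitting
into a distinguished triangle of `T`. -/
def UConflation (U : Set T) ⦃Z Y X : ObjectProperty.FullSubcategory (fun X : T => X ∈ U)⦄
    (g : Z ⟶ Y) (f : Y ⟶ X) : Prop :=
  ∃ δ : X.obj ⟶ Z.obj⟦(1 : ℤ)⟧,
    Pretriangulated.Triangle.mk (show Z.obj ⟶ Y.obj from g.hom) (show Y.obj ⟶ X.obj from f.hom) δ ∈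
      Pretriangulated.distinguishedTriangles

/-- The restriction to `U` of the functor `Hom_T(-, M)`. -/
def restrictedHom (U : Set T) (M : T) : Mod (ObjectProperty.FullSubcategory (fun X : T => X ∈ U)) :=
  (ObjectProperty.ι (fun X : T => X ∈ U)).op ⋙ preadditiveYoneda.obj M

/-- A defect over `U`: the cokernel of `Hom(-,Y)|_U ⟶ Hom(-,X)|_U` for a
conflation `Z ⟶ Y ⟶ X` of `U`, expressed pointwise. -/
def IsDefectU (U : Set T) (F : Mod (ObjectProperty.FullSubcategory (fun X : T => X ∈ U))) : Prop :=
  ∃ (Z Y X : ObjectProperty.FullSubcategory (fun X : T => X ∈ U)) (g : Z ⟶ Y) (f : Y ⟶ X),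
    UConflation U g f ∧
    ∃ p : preadditiveYoneda.obj X ⟶ F,
      (∀ W, Function.Surjective (p.app W)) ∧
      (∀ (W : ObjectProperty.FullSubcategory (fun X : T => X ∈ U)) (h : W ⟶ X),
        p.app (op W) h = 0 ↔ ∃ k : W ⟶ Y, k ≫ f = h)

/-- `Ext¹(S, F) = 0` in `mod U`, via splitting of pointwise short exact
sequences of finitely presented functors. -/
def Ext1VanishesFP {C : Type u} [Category.{v} C] [Preadditive C]
    (S F : Mod C) : Prop :=
  ∀ (G : Mod C), IsFinitelyPresented G → ∀ (i : F ⟶ G) (p : G ⟶ S),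
    (∀ W, Function.Injective (i.app W)) → (∀ W, Function.Surjective (p.app W)) →
    (∀ (W : Cᵒᵖ) (y : G.obj W), p.app W y = 0 ↔ ∃ x, i.app W x = y) →
    ∃ r : G ⟶ F, i ≫ r = 𝟙 F

section Aux

open Pretriangulated

/-- Naturality of a natural transformation of `AddCommGrp`-valued functors,
applied to an element. -/
lemma nat_app {A B : Mod C} (η : A ⟶ B) {W W' : Cᵒᵖ} (k : W ⟶ W') (x : A.obj W) :
    η.app W' (A.map k x) = B.map k (η.app W x) := by
  rw [← CategoryTheory.comp_apply, η.naturality k, CategoryTheory.comp_apply]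

/-- Naturality for transformations out of a representable functor, applied to a morphism. -/
lemma yoneda_app_comp {A : C} {G : Mod C} (q : preadditiveYoneda.obj A ⟶ G)
    {W W' : C} (k : W' ⟶ W) (h : W ⟶ A) :
    q.app (op W') (k ≫ h) = G.map k.op (q.app (op W) h) :=
  nat_app q k.op h

/-- If `Hom(Y, V₁⟦1⟧) = 0` for all `V₁ ∈ V`, then `Y ∈ U`. -/
lemma mem_of_forall_hom_zero {U V : Set T} (hUV : TriaCotorsionPair T U V) {Y : T}
    (hY : ∀ V₁ ∈ V, ∀ φ : Y ⟶ V₁⟦(1 : ℤ)⟧, φ = 0) : Y ∈ U := by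
  obtain ⟨U₀, V₀, a, b, c, hU₀, hV₀, hdist⟩ := hUV.exists_triangle Y
  have hb : b = 0 := hY V₀ hV₀ b
  obtain ⟨e, -, -⟩ := exists_iso_binaryBiproduct_of_distTriang _
    (inv_rot_of_distTriang _ hdist) (by dsimp [Triangle.invRotate]; rw [hb]; exact Limits.zero_comp)
  exact hUV.summand_U (hUV.isoClosed_U (e ≪≫ biprod.braiding _ _) hU₀)

/-- Any morphism `Z'⟦1⟧ ⟶ V'⟦2⟧` with `Z' ∈ U`, `V' ∈ V` vanishes. -/
lemma hom_shift_two_zero {U V : Set T} (hUV : TriaCotorsionPair T U V) {Z' V' : T}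
    (hZ' : Z' ∈ U) (hV' : V' ∈ V) (ψ : Z'⟦(1 : ℤ)⟧ ⟶ V'⟦(2 : ℤ)⟧) : ψ = 0 := by
  have e : (V'⟦(2 : ℤ)⟧ : T) ≅ (V'⟦(1 : ℤ)⟧)⟦(1 : ℤ)⟧ :=
    (shiftFunctorAdd' T 1 1 2 (by norm_num)).app V'
  obtain ⟨χ, hχ⟩ := (shiftFunctor T (1 : ℤ)).map_surjective (ψ ≫ e.hom)
  have hz : ψ ≫ e.hom = 0 := by
    rw [← hχ, hUV.hom_zero hZ' hV' χ, Functor.map_zero]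
  rw [← Category.comp_id ψ, ← e.hom_inv_id, ← Category.assoc, hz, Limits.zero_comp]

/-- The transformation `Hom(-,A)|_U ⟶ Hom(-,M)|_U` induced by `w : A ⟶ M`. -/
def yonedaTo (U : Set T) (A : ObjectProperty.FullSubcategory (fun X : T => X ∈ U)) {M : T}
    (w : A.obj ⟶ M) : preadditiveYoneda.obj A ⟶ restrictedHom U M :=
  { app := fun W => AddCommGrpCat.ofHom
      { toFun := fun h => h.hom ≫ w
        map_zero' := Limits.zero_comp
        map_add' := fun a b => Preadditive.add_comp _ _ _ _ _ _ }
    naturality := by intro W W' k; ext h; exact Category.assoc _ _ _ }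

lemma yonedaTo_app (U : Set T) (A : ObjectProperty.FullSubcategory (fun X : T => X ∈ U)) {M : T}
    (w : A.obj ⟶ M) (W : ObjectProperty.FullSubcategory (fun X : T => X ∈ U)) (h : W ⟶ A) :
    (yonedaTo U A w).app (op W) h = h.hom ≫ w := rfl

end Aux

/-- For a cotorsion pair `(U, V)` in a triangulated category:
(1) for `V' ∈ V` the functor `Hom_T(-, V'⟦2⟧)|_U` lies in `(def U)^⊥`;
(2) for `U' ∈ U` the functor `Hom_T(-, U'⟦1⟧)|_U` is a defect. -/
theorem cotorsion_perp_and_defect (U V : Set T) (hUV : TriaCotorsionPair T U V) :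
    (∀ V' : T, V' ∈ V →
      ∀ S : Mod (ObjectProperty.FullSubcategory (fun X : T => X ∈ U)), IsDefectU U S →
        (∀ α : S ⟶ restrictedHom U (V'⟦(2 : ℤ)⟧), α = 0) ∧
        Ext1VanishesFP S (restrictedHom U (V'⟦(2 : ℤ)⟧))) ∧
    (∀ U' : T, U' ∈ U → IsDefectU U (restrictedHom U (U'⟦(1 : ℤ)⟧))) := by
  constructor
  · rintro V' hV' S ⟨Z, Y, X, g, f, ⟨δ, hdist⟩, p, hsurj, hker⟩
    have hpf : p.app (op Y) f = 0 := (hker Y f).mpr ⟨𝟙 Y, Category.id_comp f⟩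
    constructor
    · -- (1a) : Hom(S, Hom(-,V'⟦2⟧)|_U) = 0
      intro α
      let φ : X.obj ⟶ (V'⟦(2 : ℤ)⟧ : T) := α.app (op X) (p.app (op X) (𝟙 X))
      have key : ∀ (W : ObjectProperty.FullSubcategory (fun X : T => X ∈ U)) (h : W ⟶ X),
          α.app (op W) (p.app (op W) h) = h.hom ≫ φ := by
        intro W h
        have h1 : p.app (op W) h = S.map h.op (p.app (op X) (𝟙 X)) := by
          have h2 := yoneda_app_comp p h (𝟙 X)
          rw [Category.comp_id] at h2
          exact h2
        rw [h1, nat_app α h.op]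
        rfl
      have hfφ : f.hom ≫ φ = 0 := by
        have h3 := key Y f
        rw [hpf, map_zero] at h3
        exact h3.symm
      obtain ⟨ψ, hψ⟩ := Pretriangulated.Triangle.yoneda_exact₃ _ hdist φ hfφ
      have hφ0 : φ = 0 := by
        rw [hψ, hom_shift_two_zero hUV Z.property hV' ψ]; exact Limits.comp_zero
      ext W x
      obtain ⟨W⟩ := W
      obtain ⟨h, rfl⟩ := hsurj (op W) x
      have h4 := key W h
      rw [hφ0, Limits.comp_zero] at h4
      rw [h4]
      rfl
    · -- (1b) : Ext¹(S, Hom(-,V'⟦2⟧)|_U) = 0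
      intro G hG i pS hinj hsurjS hexact
      obtain ⟨Y₁, X₁, f₁, p₁, hsurj₁, hker₁⟩ := hG
      -- choose a lift of the canonical generator of S through G and Hom(-,X₁)
      obtain ⟨y₀, hy₀⟩ := hsurjS (op X) (p.app (op X) (𝟙 X))
      obtain ⟨u, hu⟩ := hsurj₁ (op X) y₀
      -- the lift Hom(-,X) ⟶ G of p
      let Λ : preadditiveYoneda.obj X ⟶ G := preadditiveYoneda.map u ≫ p₁
      have Λapp : ∀ (W : ObjectProperty.FullSubcategory (fun X : T => X ∈ U)) (h : W ⟶ X),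
          Λ.app (op W) h = G.map h.op y₀ := by
        intro W h
        have : Λ.app (op W) h = p₁.app (op W) (h ≫ u) := rfl
        rw [this, yoneda_app_comp p₁ h u, hu]
      have ΛpS : ∀ (W : ObjectProperty.FullSubcategory (fun X : T => X ∈ U)) (h : W ⟶ X),
          pS.app (op W) (Λ.app (op W) h) = p.app (op W) h := by
        intro W h
        rw [Λapp W h, nat_app pS h.op y₀, hy₀]
        have h2 := yoneda_app_comp p h (𝟙 X)
        rw [Category.comp_id] at h2
        exact h2.symm
      -- the element v of F(Y) hitting Λ(f)
      obtain ⟨v, hv⟩ := (hexact (op Y) (Λ.app (op Y) f)).mp (by rw [ΛpS Y f, hpf])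
      have hgv : g.hom ≫ (show Y.obj ⟶ (V'⟦(2 : ℤ)⟧ : T) from v) = 0 := by
        have e0 : (restrictedHom U (V'⟦(2 : ℤ)⟧)).map g.op v = 0 := by
          apply hinj (op Z)
          have e1 : i.app (op Z) ((restrictedHom U (V'⟦(2 : ℤ)⟧)).map g.op v)
              = G.map g.op (i.app (op Y) v) := nat_app i g.op v
          rw [hv, Λapp Y f] at e1
          rw [e1, map_zero]
          have e3 : G.map g.op (G.map f.op y₀) = G.map ((g ≫ f : Z ⟶ X)).op y₀ := by
            rw [op_comp, Functor.map_comp]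
            rfl
          have hgf : (g ≫ f : Z ⟶ X) = 0 :=
            ObjectProperty.hom_ext _ (Pretriangulated.comp_distTriang_mor_zero₁₂ _ hdist)
          rw [e3, hgf]
          have e4 : G.map ((0 : Z ⟶ X)).op y₀ = Λ.app (op Z) 0 := (Λapp Z 0).symm
          rw [e4, map_zero]
        exact e0
      obtain ⟨w, hw⟩ := Pretriangulated.Triangle.yoneda_exact₂ _ hdist
        (show Y.obj ⟶ (V'⟦(2 : ℤ)⟧ : T) from v) hgv
      -- the corrected lift q : Hom(-,X) ⟶ G, which kills f
      let q : preadditiveYoneda.obj X ⟶ G := Λ - (yonedaTo U X w ≫ i)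
      have qapp : ∀ (W : ObjectProperty.FullSubcategory (fun X : T => X ∈ U)) (h : W ⟶ X),
          q.app (op W) h = Λ.app (op W) h
            - i.app (op W) (h.hom ≫ w) := by
        intro W h
        have : q.app (op W) = Λ.app (op W) - (yonedaTo U X w ≫ i).app (op W) :=
          NatTrans.app_sub _ _ _
        rw [this]
        rfl
      have qpS : ∀ (W : ObjectProperty.FullSubcategory (fun X : T => X ∈ U)) (h : W ⟶ X),
          pS.app (op W) (q.app (op W) h) = p.app (op W) h := by
        intro W h
        rw [qapp W h, map_sub, ΛpS W h]
        have : pS.app (op W) (i.app (op W) (h.hom ≫ w)) = 0 :=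
          (hexact (op W) _).mpr ⟨_, rfl⟩
        rw [this, sub_zero]
      have qf : q.app (op Y) f = 0 := by
        rw [qapp Y f]
        have : i.app (op Y) (f.hom ≫ w) = Λ.app (op Y) f := by
          rw [← hv]
          exact congrArg (i.app (op Y)) hw.symm
        rw [this, sub_self]
      have hq0 : ∀ (W : ObjectProperty.FullSubcategory (fun X : T => X ∈ U)) (h : W ⟶ X),
          p.app (op W) h = 0 → q.app (op W) h = 0 := by
        intro W h h0
        obtain ⟨k, hk⟩ := (hker W h).mp h0
        rw [← hk, yoneda_app_comp q k f, qf, map_zero]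
      -- the section s of pS
      let sF : ∀ W : ObjectProperty.FullSubcategory (fun X : T => X ∈ U),
          S.obj (op W) → G.obj (op W) := fun W x =>
        q.app (op W) (Classical.choose (hsurj (op W) x))
      have sF_pspec : ∀ (W : ObjectProperty.FullSubcategory (fun X : T => X ∈ U)) (x),
          p.app (op W) (Classical.choose (hsurj (op W) x)) = x :=
        fun W x => Classical.choose_spec (hsurj (op W) x)
      have hsF : ∀ (W : ObjectProperty.FullSubcategory (fun X : T => X ∈ U)) (h : W ⟶ X),
          sF W (p.app (op W) h) = q.app (op W) h := by
        intro W h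
        have e : p.app (op W)
            ((Classical.choose (hsurj (op W) (p.app (op W) h)) : (preadditiveYoneda.obj X).obj (op W)) - (@id ((preadditiveYoneda.obj X).obj (op W)) h)) = 0 := by
          rw [map_sub, sF_pspec]; exact sub_self _
        have e2 := hq0 W _ e
        rw [map_sub] at e2
        exact sub_eq_zero.mp e2
      have sFadd : ∀ (W : ObjectProperty.FullSubcategory (fun X : T => X ∈ U)) (x y : S.obj (op W)),
          sF W (x + y) = sF W x + sF W y := by
        intro W x y
        obtain ⟨a, rfl⟩ := hsurj (op W) x
        obtain ⟨b, rfl⟩ := hsurj (op W) y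
        rw [← map_add]; exact (hsF W (a + b)).trans ((map_add _ a b).trans (congrArg₂ (· + ·) (hsF W a).symm (hsF W b).symm))
      have sF0 : ∀ W : ObjectProperty.FullSubcategory (fun X : T => X ∈ U), sF W 0 = 0 :=
        fun W => hq0 W _ (sF_pspec W 0)
      have sFnat : ∀ (W W' : ObjectProperty.FullSubcategory (fun X : T => X ∈ U)) (k : W' ⟶ W)
          (x : S.obj (op W)), sF W' (S.map k.op x) = G.map k.op (sF W x) := by
        intro W W' k x
        obtain ⟨a, rfl⟩ := hsurj (op W) x
        rw [hsF W a, ← yoneda_app_comp p k a, hsF W' _, yoneda_app_comp q k a]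
      have pSsF : ∀ (W : ObjectProperty.FullSubcategory (fun X : T => X ∈ U)) (x : S.obj (op W)),
          pS.app (op W) (sF W x) = x := by
        intro W x
        obtain ⟨a, rfl⟩ := hsurj (op W) x
        rw [hsF W a]
        exact qpS W a
      -- the retraction r of i
      have hr : ∀ (W : ObjectProperty.FullSubcategory (fun X : T => X ∈ U)) (y : G.obj (op W)),
          ∃ x : (restrictedHom U (V'⟦(2 : ℤ)⟧)).obj (op W),
            i.app (op W) x = y - sF W (pS.app (op W) y) := by
        intro W y
        apply (hexact (op W) _).mp
        rw [map_sub, pSsF, sub_self]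
      let rF : ∀ W : ObjectProperty.FullSubcategory (fun X : T => X ∈ U),
          G.obj (op W) → (restrictedHom U (V'⟦(2 : ℤ)⟧)).obj (op W) := fun W y =>
        Classical.choose (hr W y)
      have rF_spec : ∀ (W : ObjectProperty.FullSubcategory (fun X : T => X ∈ U)) (y : G.obj (op W)),
          i.app (op W) (rF W y) = y - sF W (pS.app (op W) y) :=
        fun W y => Classical.choose_spec (hr W y)
      have rFi : ∀ (W : ObjectProperty.FullSubcategory (fun X : T => X ∈ U))
          (x : (restrictedHom U (V'⟦(2 : ℤ)⟧)).obj (op W)), rF W (i.app (op W) x) = x := by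
        intro W x
        apply hinj (op W)
        rw [rF_spec W _]
        have : pS.app (op W) (i.app (op W) x) = 0 := (hexact (op W) _).mpr ⟨_, rfl⟩
        rw [this, sF0, sub_zero]
      have rFadd : ∀ (W : ObjectProperty.FullSubcategory (fun X : T => X ∈ U)) (y y' : G.obj (op W)),
          rF W (y + y') = rF W y + rF W y' := by
        intro W y y'
        apply hinj (op W)
        rw [map_add, rF_spec, rF_spec, rF_spec, map_add, sFadd]
        abel
      have rF0 : ∀ W : ObjectProperty.FullSubcategory (fun X : T => X ∈ U), rF W 0 = 0 := by
        intro W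
        apply hinj (op W)
        rw [rF_spec, map_zero, sF0, map_zero, sub_zero]
      have rFnat : ∀ (W W' : ObjectProperty.FullSubcategory (fun X : T => X ∈ U)) (k : W' ⟶ W)
          (y : G.obj (op W)),
          rF W' (G.map k.op y) = (restrictedHom U (V'⟦(2 : ℤ)⟧)).map k.op (rF W y) := by
        intro W W' k y
        apply hinj (op W')
        rw [rF_spec, nat_app i k.op, rF_spec, map_sub, nat_app pS k.op y, sFnat]
      refine ⟨{ app := fun W => AddCommGrpCat.ofHom
                  { toFun := fun y => rF W.unop y
                    map_zero' := rF0 W.unop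
                    map_add' := rFadd W.unop }
                naturality := ?_ }, ?_⟩
      · intro W W' k
        ext y
        show rF W'.unop (G.map k y) = (restrictedHom U (V'⟦(2 : ℤ)⟧)).map k (rF W.unop y)
        exact rFnat W.unop W'.unop k.unop y
      · ext W x
        obtain ⟨W⟩ := W
        exact rFi W x
  · -- (2) : Hom(-, U'⟦1⟧)|_U is a defect
    intro U' hU'
    obtain ⟨U₀, V₀, a, b, c, hU₀, hV₀, hT1⟩ := hUV.exists_triangle (U'⟦(1 : ℤ)⟧)
    obtain ⟨Y₀, f₀, g₀, hT2⟩ := Pretriangulated.distinguished_cocone_triangle₂ a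
    have hY₀ : Y₀ ∈ U := by
      apply mem_of_forall_hom_zero hUV
      intro V₁ hV₁ φ
      have h1 : f₀ ≫ φ = 0 := hUV.hom_zero hU' hV₁ (f₀ ≫ φ)
      obtain ⟨ψ, hψ⟩ := Pretriangulated.Triangle.yoneda_exact₂ _ hT2 φ h1
      rw [hψ, hUV.hom_zero hU₀ hV₁ ψ]; exact Limits.comp_zero
    refine ⟨⟨U', hU'⟩, ⟨Y₀, hY₀⟩, ⟨U₀, hU₀⟩, ObjectProperty.homMk f₀, ObjectProperty.homMk g₀, ⟨a, hT2⟩,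
      yonedaTo U ⟨U₀, hU₀⟩ a, ?_, ?_⟩
    · intro W ψ
      have hψb : (show W.unop.obj ⟶ (U'⟦(1 : ℤ)⟧ : T) from ψ) ≫ b = 0 :=
        hUV.hom_zero W.unop.property hV₀ _
      obtain ⟨h, hh⟩ := Pretriangulated.Triangle.coyoneda_exact₂ _ hT1 _ hψb
      exact ⟨ObjectProperty.homMk h, hh.symm⟩
    · intro W h
      constructor
      · intro h0
        have h0' : h.hom ≫ a = 0 := h0
        obtain ⟨k, hk⟩ := Pretriangulated.Triangle.coyoneda_exact₃ _ hT2 _ h0'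
        exact ⟨ObjectProperty.homMk k, ObjectProperty.hom_ext _ hk.symm⟩
      · rintro ⟨k, rfl⟩
        have hz : g₀ ≫ a = 0 := Pretriangulated.comp_distTriang_mor_zero₂₃ _ hT2
        show (k.hom ≫ g₀) ≫ a = 0
        calc (k.hom ≫ g₀) ≫ a
            = k.hom ≫ (g₀ ≫ a) :=
              Category.assoc k.hom g₀ a
          _ = 0 := by rw [hz, Limits.comp_zero]


end PaperStmt

end
end
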